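/- Let E, F be Banach spaces, T : E → F a Fredholm operator and S : E → F a compact operator. Then T + S is Fredholm and index(T + S) = index(T). -/

import Mathlib

/-- A bounded operator is Fredholm if its kernel is finite-dimensional and its range
is closed of finite codimension. -/
def IsFredholm {E F : Type*} [NormedAddCommGroup E] [NormedSpace ℝ E]
    [NormedAddCommGroup F] [NormedSpace ℝ F] (T : E →L[ℝ] F) : Prop :=
  FiniteDimensional ℝ (LinearMap.ker (T : E →ₗ[ℝ] F)) ∧ IsClosed (LinearMap.range (T : E →ₗ[ℝ] F) : Set F) ∧
    FiniteDimensional ℝ (F ⧸ LinearMap.range (T : E →ₗ[ℝ] F))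

/-- The Fredholm index `dim ker T - dim coker T`. -/
noncomputable def fredholmIndex {E F : Type*} [NormedAddCommGroup E] [NormedSpace ℝ E]
    [NormedAddCommGroup F] [NormedSpace ℝ F] (T : E →L[ℝ] F) : ℤ :=
  (Module.finrank ℝ (LinearMap.ker (T : E →ₗ[ℝ] F)) : ℤ) -
    (Module.finrank ℝ (F ⧸ LinearMap.range (T : E →ₗ[ℝ] F)) : ℤ)

abbrev ker {E F : Type*} [NormedAddCommGroup E] [NormedSpace ℝ E]
    [NormedAddCommGroup F] [NormedSpace ℝ F] (T : E →L[ℝ] F) : Submodule ℝ E :=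
  LinearMap.ker (T : E →ₗ[ℝ] F)

abbrev range {E F : Type*} [NormedAddCommGroup E] [NormedSpace ℝ E]
    [NormedAddCommGroup F] [NormedSpace ℝ F] (T : E →L[ℝ] F) : Submodule ℝ F :=
  LinearMap.range (T : E →ₗ[ℝ] F)

open scoped NNReal
open Filter Topology
open Module Submodule

section Prelim

variable {E F G : Type*} [NormedAddCommGroup E] [NormedSpace ℝ E]
  [NormedAddCommGroup F] [NormedSpace ℝ F] [NormedAddCommGroup G] [NormedSpace ℝ G]

/-- The sum of a closed submodule and a finite-dimensional submodule is closed. -/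
theorem aux_closed_sup {V W : Submodule ℝ F} (hV : IsClosed (V : Set F))
    [FiniteDimensional ℝ W] : IsClosed ((V ⊔ W : Submodule ℝ F) : Set F) := by
  haveI : IsClosed (V : Set F) := hV
  have : (V ⊔ W : Submodule ℝ F) = Submodule.comap V.mkQ (Submodule.map V.mkQ W) := by
    rw [Submodule.comap_map_eq, Submodule.ker_mkQ, sup_comm]
  rw [this]
  haveI : FiniteDimensional ℝ (Submodule.map V.mkQ W) :=
    Module.Finite.map W (V.mkQ : F →ₗ[ℝ] F ⧸ V)
  exact (Submodule.closed_of_finiteDimensional (Submodule.map V.mkQ W)).preimage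
    (continuous_quot_mk : Continuous V.mkQ)

/-- A continuous linear map into a finite-dimensional space is compact. -/
theorem aux_compact_of_fd [FiniteDimensional ℝ G] (f : E →L[ℝ] G) :
    IsCompactOperator f := by
  refine ⟨Metric.closedBall 0 ‖f‖, ProperSpace.isCompact_closedBall 0 ‖f‖, ?_⟩
  have : Metric.closedBall (0 : E) 1 ⊆ f ⁻¹' Metric.closedBall 0 ‖f‖ := by
    intro x hx
    simp only [Set.mem_preimage, Metric.mem_closedBall, dist_zero_right] at *
    calc ‖f x‖ ≤ ‖f‖ * ‖x‖ := f.le_opNorm x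
    _ ≤ ‖f‖ * 1 := by
        exact mul_le_mul_of_nonneg_left hx (norm_nonneg f)
    _ = ‖f‖ := mul_one _
  exact Filter.mem_of_superset (Metric.closedBall_mem_nhds 0 one_pos) this

theorem aux_compact_prod {f : E →L[ℝ] F} {g : E →L[ℝ] G} (hf : IsCompactOperator f)
    (hg : IsCompactOperator g) : IsCompactOperator (f.prod g) := by
  obtain ⟨K₁, hK₁, hK₁'⟩ := hf
  obtain ⟨K₂, hK₂, hK₂'⟩ := hg
  exact ⟨K₁ ×ˢ K₂, hK₁.prod hK₂, Filter.inter_mem hK₁' hK₂'⟩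

/-- Finite rank operator (range contained in a f.d. submodule) is compact. -/
theorem aux_compact_of_range_le {f : E →L[ℝ] F} {W : Submodule ℝ F} [FiniteDimensional ℝ W]
    (hf : range f ≤ W) : IsCompactOperator f := by
  have : IsCompactOperator (f.codRestrict W fun x => hf (LinearMap.mem_range_self _ x)) :=
    aux_compact_of_fd _
  have h2 := this.continuous_comp (g := (W.subtypeL : W →L[ℝ] F)) W.subtypeL.continuous
  exact h2

end Prelim

section FData

set_option linter.unusedSectionVars false

variable {E F : Type*} [NormedAddCommGroup E] [NormedSpace ℝ E] [CompleteSpace E]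
  [NormedAddCommGroup F] [NormedSpace ℝ F] [CompleteSpace F]

/-- Data witnessing Fredholmness of `A`: an isomorphism `(x, w) ↦ (A x + w, p x)`. -/
structure FData (A : E →L[ℝ] F) where
  N : Submodule ℝ E
  W : Submodule ℝ F
  hN : FiniteDimensional ℝ N
  hW : FiniteDimensional ℝ W
  p : E →L[ℝ] N
  Φ : (E × W) ≃L[ℝ] F × N
  hΦ : ∀ (x : E) (w : W), Φ (x, w) = (A x + w, p x)

namespace FData

variable {A : E →L[ℝ] F}

theorem eq_zero (d : FData A) {x : E} (h1 : A x = 0) (h2 : d.p x = 0) : x = 0 := by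
  have h : d.Φ (x, (0 : d.W)) = d.Φ (0, 0) := by
    rw [d.hΦ, d.hΦ]; simp [h1, h2]
  exact congrArg Prod.fst (d.Φ.injective h)

theorem fd_ker (d : FData A) : FiniteDimensional ℝ (ker A) := by
  haveI := d.hN
  refine FiniteDimensional.of_injective ((d.p : E →ₗ[ℝ] d.N).comp (ker A).subtype) ?_
  intro x y hxy
  simp only [LinearMap.comp_apply, Submodule.coe_subtype] at hxy
  have h : d.p ((x : E) - y) = 0 := by rw [map_sub]; rw [ContinuousLinearMap.coe_coe] at hxy; rw [hxy, sub_self]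
  have h2 : A ((x : E) - y) = 0 := by
    have hx := x.2; have hy := y.2
    rw [LinearMap.mem_ker, ContinuousLinearMap.coe_coe] at hx hy
    rw [map_sub, hx, hy, sub_self]
  exact Subtype.ext (sub_eq_zero.mp (d.eq_zero h2 h))

/-- the subspace `A ⁻¹ W` is equivalent to `N` via `p`. -/
noncomputable def preimEquiv (d : FData A) :
    (Submodule.comap (A : E →ₗ[ℝ] F) d.W) ≃ₗ[ℝ] d.N := by
  refine LinearEquiv.ofBijective ((d.p : E →ₗ[ℝ] d.N).comp
    (Submodule.comap (A : E →ₗ[ℝ] F) d.W).subtype) ⟨?_, ?_⟩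
  · intro x y hxy
    simp only [LinearMap.comp_apply, Submodule.coe_subtype, ContinuousLinearMap.coe_coe] at hxy
    have hmem : A ((x : E) - y) ∈ d.W := by
      have hx := x.2; have hy := y.2
      simp only [Submodule.mem_comap, ContinuousLinearMap.coe_coe] at hx hy
      rw [map_sub]; exact sub_mem hx hy
    have hkey : d.Φ ((x : E) - y, -⟨A ((x : E) - y), hmem⟩) = d.Φ (0, 0) := by
      rw [d.hΦ, d.hΦ]
      have hp : d.p ((x : E) - y) = 0 := by rw [map_sub, hxy, sub_self]
      simp [hp]
    exact Subtype.ext (sub_eq_zero.mp (congrArg Prod.fst (d.Φ.injective hkey)))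
  · intro n
    obtain ⟨⟨x, w⟩, hxw⟩ := d.Φ.surjective ((0 : F), n)
    rw [d.hΦ] at hxw
    have h1 : A x + (w : F) = 0 := congrArg Prod.fst hxw
    have h2 : d.p x = n := congrArg Prod.snd hxw
    refine ⟨⟨x, ?_⟩, h2⟩
    simp only [Submodule.mem_comap, ContinuousLinearMap.coe_coe]
    rw [eq_neg_of_add_eq_zero_left h1]
    exact neg_mem w.2

theorem sup_eq_top (d : FData A) : range A ⊔ d.W = ⊤ := by
  rw [eq_top_iff]
  intro y _
  obtain ⟨⟨x, w⟩, hxw⟩ := d.Φ.surjective (y, d.p 0)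
  rw [d.hΦ] at hxw
  have h1 : A x + (w : F) = y := congrArg Prod.fst hxw
  exact Submodule.mem_sup.2 ⟨A x, LinearMap.mem_range_self _ x, w, w.2, h1⟩

theorem fd_G (d : FData A) : FiniteDimensional ℝ (Submodule.comap (A : E →ₗ[ℝ] F) d.W) := by
  haveI := d.hN
  exact d.preimEquiv.symm.finiteDimensional

theorem finrank_eq_one (d : FData A) :
    finrank ℝ d.N = finrank ℝ (range A ⊓ d.W : Submodule ℝ F) + finrank ℝ (ker A) := by
  haveI := d.hN
  haveI := d.fd_G
  set G := Submodule.comap (A : E →ₗ[ℝ] F) d.W with hG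
  have hNG : finrank ℝ d.N = finrank ℝ G := d.preimEquiv.symm.finrank_eq
  set f : G →ₗ[ℝ] F := (A : E →ₗ[ℝ] F).comp G.subtype with hf
  have hrange : LinearMap.range f = range A ⊓ d.W := by
    apply le_antisymm
    · rintro _ ⟨x, rfl⟩
      exact ⟨⟨(x : E), rfl⟩, x.2⟩
    · rintro y ⟨⟨x, rfl⟩, hy⟩
      exact ⟨⟨x, hy⟩, rfl⟩
  have hker : finrank ℝ (LinearMap.ker f) = finrank ℝ (ker A) := by
    have h1 : LinearMap.ker f = Submodule.comap G.subtype (ker A) := by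
      rw [hf, LinearMap.ker_comp]
    have hle : (ker A : Submodule ℝ E) ≤ G := by
      intro x hx
      rw [LinearMap.mem_ker] at hx
      simp only [hG, Submodule.mem_comap, ContinuousLinearMap.coe_coe, hx]
      exact zero_mem _
    rw [h1]
    exact (Submodule.comapSubtypeEquivOfLe hle).finrank_eq
  have := f.finrank_range_add_finrank_ker
  rw [hrange, hker] at this
  rw [hNG, ← this]

theorem fd_coker (d : FData A) : FiniteDimensional ℝ (F ⧸ range A) := by
  haveI := d.hW
  set s : d.W →ₗ[ℝ] F ⧸ range A := (range A).mkQ.comp d.W.subtype with hs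
  have hsurj : Function.Surjective s := by
    intro yq
    obtain ⟨y, rfl⟩ := (range A).mkQ_surjective yq
    have hy : y ∈ range A ⊔ d.W := d.sup_eq_top ▸ Submodule.mem_top
    obtain ⟨r, hr, w, hw, hrw⟩ := Submodule.mem_sup.1 hy
    refine ⟨⟨w, hw⟩, ?_⟩
    simp only [hs, LinearMap.comp_apply, Submodule.coe_subtype]
    rw [← hrw, map_add]
    have h0 : (range A).mkQ r = 0 := (Submodule.Quotient.mk_eq_zero _).2 hr
    rw [h0, zero_add]
  exact Module.Finite.of_surjective s hsurj

theorem finrank_eq_two (d : FData A) :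
    finrank ℝ d.W = finrank ℝ (F ⧸ range A) + finrank ℝ (range A ⊓ d.W : Submodule ℝ F) := by
  haveI := d.hW
  haveI := d.fd_coker
  set s : d.W →ₗ[ℝ] F ⧸ range A := (range A).mkQ.comp d.W.subtype with hs
  have hsurj : LinearMap.range s = ⊤ := by
    rw [LinearMap.range_eq_top]
    intro yq
    obtain ⟨y, rfl⟩ := (range A).mkQ_surjective yq
    have hy : y ∈ range A ⊔ d.W := d.sup_eq_top ▸ Submodule.mem_top
    obtain ⟨r, hr, w, hw, hrw⟩ := Submodule.mem_sup.1 hy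
    refine ⟨⟨w, hw⟩, ?_⟩
    simp only [hs, LinearMap.comp_apply, Submodule.coe_subtype, Submodule.mkQ_apply]
    rw [← hrw]
    rw [Submodule.Quotient.eq]
    simpa using hr
  have hker : finrank ℝ (LinearMap.ker s) = finrank ℝ (range A ⊓ d.W : Submodule ℝ F) := by
    have h1 : LinearMap.ker s = Submodule.comap d.W.subtype (range A ⊓ d.W) := by
      ext z
      simp only [hs, LinearMap.mem_ker, LinearMap.comp_apply, Submodule.coe_subtype,
        Submodule.mem_comap, Submodule.mem_inf, Submodule.mkQ_apply,
        Submodule.Quotient.mk_eq_zero]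
      exact ⟨fun h => ⟨h, z.2⟩, fun h => h.1⟩
    rw [h1]
    exact (Submodule.comapSubtypeEquivOfLe inf_le_right).finrank_eq
  have := s.finrank_range_add_finrank_ker
  rw [hsurj, hker, finrank_top] at this
  rw [← this]

theorem isClosed_range (d : FData A) : IsClosed (range A : Set F) := by
  set M₀ : Submodule ℝ E := LinearMap.ker d.p.toLinearMap with hM₀
  have hM₀closed : IsClosed (M₀ : Set E) := ContinuousLinearMap.isClosed_ker d.p
  haveI : CompleteSpace M₀ := hM₀closed.completeSpace_coe
  set A₀ : M₀ →L[ℝ] F := A.comp M₀.subtypeL with hA₀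
  set K : ℝ≥0 := ‖(d.Φ.symm : F × d.N →L[ℝ] E × d.W)‖₊ with hK
  have hbound : ∀ m : M₀, ‖m‖ ≤ (K : ℝ) * ‖A₀ m‖ := by
    intro m
    have hpm : d.p (m : E) = 0 := m.2
    have hΦm : d.Φ ((m : E), (0 : d.W)) = (A (m : E), 0) := by
      rw [d.hΦ]; simp [hpm]
    have h1 : ‖(m : E)‖ ≤ ‖((m : E), (0 : d.W))‖ := norm_fst_le ((m : E), (0 : d.W))
    have h2 : ((m : E), (0 : d.W)) = d.Φ.symm (A (m : E), 0) := by
      rw [← hΦm, ContinuousLinearEquiv.symm_apply_apply]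
    have h3 : ‖d.Φ.symm (A (m : E), (0 : d.N))‖ ≤
        ‖(d.Φ.symm : F × d.N →L[ℝ] E × d.W)‖ * ‖(A (m : E), (0 : d.N))‖ :=
      (d.Φ.symm : F × d.N →L[ℝ] E × d.W).le_opNorm _
    have h4 : ‖(A (m : E), (0 : d.N))‖ = ‖A (m : E)‖ := by
      rw [Prod.norm_def]; simp [norm_nonneg]
    calc ‖m‖ = ‖(m : E)‖ := rfl
    _ ≤ ‖((m : E), (0 : d.W))‖ := h1
    _ = ‖d.Φ.symm (A (m : E), (0 : d.N))‖ := by rw [h2]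
    _ ≤ ‖(d.Φ.symm : F × d.N →L[ℝ] E × d.W)‖ * ‖A (m : E)‖ := by rw [← h4]; exact h3
    _ = (K : ℝ) * ‖A₀ m‖ := by rw [hK, coe_nnnorm]; rfl
  have hanti : AntilipschitzWith _ A₀ := AddMonoidHomClass.antilipschitz_of_bound A₀ hbound
  have hclosed₀ : IsClosed (LinearMap.range A₀.toLinearMap : Set F) :=
    hanti.isClosed_range A₀.uniformContinuous
  obtain ⟨G₀, hG₀⟩ := Submodule.exists_isCompl M₀
  haveI : FiniteDimensional ℝ G₀ := by
    haveI := d.hN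
    refine FiniteDimensional.of_injective ((d.p : E →ₗ[ℝ] d.N).comp G₀.subtype) ?_
    intro x y hxy
    simp only [LinearMap.comp_apply, Submodule.coe_subtype, ContinuousLinearMap.coe_coe] at hxy
    have : (x : E) - y ∈ M₀ ⊓ G₀ := by
      constructor
      · show (x : E) - y ∈ ker d.p
        rw [LinearMap.mem_ker, ContinuousLinearMap.coe_coe]
        have : d.p ((x:E) - y) = d.p x - d.p y := map_sub _ _ _
        rw [this, hxy, sub_self]
      · exact sub_mem x.2 y.2
    rw [hG₀.inf_eq_bot] at this
    exact Subtype.ext (sub_eq_zero.mp this)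
  haveI : FiniteDimensional ℝ (Submodule.map (A : E →ₗ[ℝ] F) G₀) :=
    Module.Finite.map G₀ (A : E →ₗ[ℝ] F)
  have hrange : range A = Submodule.map (A : E →ₗ[ℝ] F) M₀ ⊔ Submodule.map (A : E →ₗ[ℝ] F) G₀ := by
    rw [← Submodule.map_sup, hG₀.sup_eq_top, _root_.range, LinearMap.range_eq_map]
  have hmapM₀ : (Submodule.map (A : E →ₗ[ℝ] F) M₀ : Set F) = (LinearMap.range A₀.toLinearMap : Set F) := by
    ext y
    simp only [SetLike.mem_coe, Submodule.mem_map, LinearMap.mem_range]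
    constructor
    · rintro ⟨x, hx, rfl⟩; exact ⟨⟨x, hx⟩, rfl⟩
    · rintro ⟨m, rfl⟩; exact ⟨(m : E), m.2, rfl⟩
  have hclosedM : IsClosed ((Submodule.map (A : E →ₗ[ℝ] F) M₀ : Submodule ℝ F) : Set F) := by
    rw [hmapM₀]; exact hclosed₀
  rw [hrange]
  exact aux_closed_sup hclosedM

theorem isFredholm (d : FData A) : IsFredholm A :=
  ⟨d.fd_ker, d.isClosed_range, d.fd_coker⟩

theorem index_eq (d : FData A) :
    fredholmIndex A = (finrank ℝ d.N : ℤ) - finrank ℝ d.W := by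
  have e1 := d.finrank_eq_one
  have e2 := d.finrank_eq_two
  simp only [_root_.ker, _root_.range] at e1 e2
  unfold fredholmIndex
  omega

end FData

theorem nonempty_fdata {A : E →L[ℝ] F} (hA : IsFredholm A) : Nonempty (FData A) := by
  obtain ⟨hker, hclosed, hcoker⟩ := hA
  haveI := hker; haveI := hcoker
  obtain ⟨p, hp⟩ := Submodule.ClosedComplemented.of_finiteDimensional (ker A)
  obtain ⟨W, hWclosed, hcompl⟩ :=
    (Submodule.ClosedComplemented.of_quotient_finiteDimensional hclosed).exists_isClosed_isCompl
  haveI : FiniteDimensional ℝ W :=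
    ((range A).quotientEquivOfIsCompl W hcompl).finiteDimensional
  set φ : (E × W) →L[ℝ] F × (ker A) :=
    ((A.comp (ContinuousLinearMap.fst ℝ E W)) +
      (W.subtypeL.comp (ContinuousLinearMap.snd ℝ E W))).prod
      (p.comp (ContinuousLinearMap.fst ℝ E W)) with hφ
  have hφ_apply : ∀ (x : E) (w : W), φ (x, w) = (A x + w, p x) := fun x w => rfl
  have hker_bot : LinearMap.ker φ.toLinearMap = ⊥ := by
    rw [LinearMap.ker_eq_bot']
    rintro ⟨x, w⟩ h
    rw [ContinuousLinearMap.coe_coe, hφ_apply] at h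
    have h1 : A x + (w : F) = 0 := congrArg Prod.fst h
    have h2 : p x = 0 := congrArg Prod.snd h
    have hAx : A x ∈ range A ⊓ W := by
      refine ⟨LinearMap.mem_range_self _ x, ?_⟩
      rw [eq_neg_of_add_eq_zero_left h1]; exact neg_mem w.2
    rw [hcompl.inf_eq_bot] at hAx
    have hxker : x ∈ ker A := hAx
    have hx0 : x = 0 := by
      have := hp ⟨x, hxker⟩
      rw [Submodule.coe_mk] at this
      rw [h2] at this
      exact congrArg Subtype.val this.symm
    have hw0 : (w : F) = 0 := by
      rw [eq_neg_of_add_eq_zero_right h1, hx0, map_zero, neg_zero]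
    exact Prod.ext hx0 (Subtype.ext hw0)
  have hrange_top : LinearMap.range φ.toLinearMap = ⊤ := by
    rw [LinearMap.range_eq_top]
    rintro ⟨y, n⟩
    have hy : y ∈ range A ⊔ W := hcompl.sup_eq_top ▸ Submodule.mem_top
    obtain ⟨r, ⟨m, rfl⟩, w, hw, hrw⟩ := Submodule.mem_sup.1 hy
    refine ⟨(m - ↑(p m) + ↑n, ⟨w, hw⟩), ?_⟩
    rw [ContinuousLinearMap.coe_coe, hφ_apply]
    have hA1 : A ↑(p m) = 0 := (p m).2
    have hA2 : A (n : E) = 0 := n.2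
    have hAx : A (m - ↑(p m) + ↑n) = A m := by rw [map_add, map_sub, hA1, hA2, sub_zero, add_zero]
    have hpx : p (m - ↑(p m) + ↑n) = n := by
      rw [map_add, map_sub, hp (p m), hp n, sub_self, zero_add]
    rw [hAx, hpx]
    rw [Prod.mk.injEq]
    exact ⟨hrw, rfl⟩
  haveI : CompleteSpace W := (FiniteDimensional.complete ℝ W)
  haveI : CompleteSpace (ker A) := (FiniteDimensional.complete ℝ (ker A))
  refine ⟨⟨ker A, W, hker, ‹_›, p, ContinuousLinearEquiv.ofBijective φ hker_bot hrange_top, ?_⟩⟩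
  intro x w
  rw [show (ContinuousLinearEquiv.ofBijective φ hker_bot hrange_top) (x, w) = φ (x, w) from rfl]
  exact hφ_apply x w

namespace FData

set_option synthInstance.maxHeartbeats 1000000 in
set_option maxHeartbeats 1000000 in
theorem perturb {A : E →L[ℝ] F} (d : FData A) :
    ∃ ε > (0 : ℝ), ∀ B : E →L[ℝ] F, ‖B‖ < ε →
      ∃ d' : FData (A + B), d'.N = d.N ∧ d'.W = d.W := by
  haveI := d.hN
  haveI := d.hW
  haveI : CompleteSpace d.W := FiniteDimensional.complete ℝ d.W
  haveI : CompleteSpace d.N := FiniteDimensional.complete ℝ d.N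
  set Ψ := (d.Φ.symm : F × d.N →L[ℝ] E × d.W) with hΨ
  refine ⟨(‖Ψ‖ + 1)⁻¹, by positivity, fun B hB => ?_⟩
  set ψ : (E × d.W) →L[ℝ] F × d.N :=
    (B.comp (ContinuousLinearMap.fst ℝ E d.W)).prod 0 with hψ
  have hψnorm : ‖ψ‖ ≤ ‖B‖ := by
    refine ContinuousLinearMap.opNorm_le_bound _ (norm_nonneg B) fun z => ?_
    have : ψ z = (B z.1, 0) := rfl
    rw [this, Prod.norm_def]
    simp only [norm_zero]
    rw [max_eq_left (norm_nonneg _)]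
    calc ‖B z.1‖ ≤ ‖B‖ * ‖z.1‖ := B.le_opNorm _
    _ ≤ ‖B‖ * ‖z‖ := mul_le_mul_of_nonneg_left (norm_fst_le z) (norm_nonneg B)
  have hsmall : ‖Ψ.comp ψ‖ < 1 := by
    calc ‖Ψ.comp ψ‖ ≤ ‖Ψ‖ * ‖ψ‖ := ContinuousLinearMap.opNorm_comp_le _ _
    _ ≤ ‖Ψ‖ * ‖B‖ := mul_le_mul_of_nonneg_left hψnorm (norm_nonneg Ψ)
    _ < 1 := by
        rcases eq_or_lt_of_le (norm_nonneg Ψ) with h0 | h0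
        · rw [← h0, zero_mul]; norm_num
        · have h1 : ‖B‖ < (‖Ψ‖ + 1)⁻¹ := hB
          have h2 : ‖Ψ‖ * ‖B‖ < ‖Ψ‖ * (‖Ψ‖ + 1)⁻¹ := by
            exact mul_lt_mul_of_pos_left h1 h0
          refine h2.trans_le ?_
          rw [mul_inv_le_iff₀ (by positivity), one_mul]
          linarith
  have hsmall' : ‖-(Ψ.comp ψ)‖ < 1 := by
    have := norm_neg (Ψ.comp ψ)
    rw [this]; exact hsmall
  set u : ((E × d.W) →L[ℝ] (E × d.W))ˣ := Units.oneSub (-(Ψ.comp ψ)) hsmall' with hu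
  have huval : (u : (E × d.W) →L[ℝ] (E × d.W)) = 1 + Ψ.comp ψ := by
    rw [hu, Units.val_oneSub, sub_neg_eq_add]
  set ue : (E × d.W) ≃L[ℝ] (E × d.W) := ContinuousLinearEquiv.unitsEquiv ℝ (E × d.W) u with hue
  set Φ' : (E × d.W) ≃L[ℝ] F × d.N := ue.trans d.Φ with hΦ'
  have hΦ'_apply : ∀ (x : E) (w : d.W), Φ' (x, w) = ((A + B) x + w, d.p x) := by
    intro x w
    have h1 : Φ' (x, w) = d.Φ (ue (x, w)) := rfl
    have h2 : ue (x, w) = (x, w) + Ψ (ψ (x, w)) := by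
      rw [hue]
      rw [show (ContinuousLinearEquiv.unitsEquiv ℝ (E × d.W) u) (x, w)
        = (u : (E × d.W) →L[ℝ] (E × d.W)) (x, w) from rfl]
      rw [huval]
      rfl
    rw [h1, h2, map_add]
    have h3 : d.Φ (Ψ (ψ (x, w))) = ψ (x, w) := d.Φ.apply_symm_apply _
    rw [h3, d.hΦ]
    have h4 : ψ (x, w) = (B x, 0) := rfl
    rw [h4]
    rw [Prod.mk_add_mk, add_zero]
    rw [ContinuousLinearMap.add_apply]
    rw [Prod.mk.injEq]
    constructor
    · abel
    · rfl
  exact ⟨⟨d.N, d.W, d.hN, d.hW, d.p, Φ', hΦ'_apply⟩, rfl, rfl⟩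

/-- Local constancy of the index. -/
theorem stability {A : E →L[ℝ] F} (hA : IsFredholm A) :
    ∃ ε > (0 : ℝ), ∀ B : E →L[ℝ] F, ‖B‖ < ε →
      IsFredholm (A + B) ∧ fredholmIndex (A + B) = fredholmIndex A := by
  obtain ⟨d⟩ := nonempty_fdata hA
  obtain ⟨ε, hε, h⟩ := d.perturb
  refine ⟨ε, hε, fun B hB => ?_⟩
  obtain ⟨d', hN, hW⟩ := h B hB
  refine ⟨d'.isFredholm, ?_⟩
  rw [d'.index_eq, d.index_eq, hN, hW]

end FData

end FData

section SemiFredholm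

variable {E F G : Type*} [NormedAddCommGroup E] [NormedSpace ℝ E] [CompleteSpace E]
  [NormedAddCommGroup F] [NormedSpace ℝ F]
  [NormedAddCommGroup G] [NormedSpace ℝ G]

theorem aux_extract {Cc : E →L[ℝ] G} (hC : IsCompactOperator Cc) (x : ℕ → E) {R : ℝ}
    (hx : ∀ n, ‖x n‖ ≤ R) :
    ∃ φ : ℕ → ℕ, StrictMono φ ∧ CauchySeq fun n => Cc (x (φ n)) := by
  obtain ⟨K, hK, hKsub⟩ :=
    hC.image_subset_compact_of_bounded (Metric.isBounded_closedBall (x := (0:E)) (r := R))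
  have hmem : ∀ n, Cc (x n) ∈ K := fun n =>
    hKsub ⟨x n, by simpa [Metric.mem_closedBall, dist_zero_right] using hx n, rfl⟩
  obtain ⟨a, _, φ, hφ, htend⟩ := hK.tendsto_subseq hmem
  exact ⟨φ, hφ, htend.cauchySeq⟩

theorem aux_cauchy {A : E →L[ℝ] F} {Cc : E →L[ℝ] G} {c : ℝ} (hcpos : 0 < c)
    (hc : ∀ x, ‖x‖ ≤ c * ‖A x‖ + c * ‖Cc x‖) {x : ℕ → E}
    (h1 : CauchySeq fun n => A (x n)) (h2 : CauchySeq fun n => Cc (x n)) : CauchySeq x := by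
  rw [Metric.cauchySeq_iff] at h1 h2 ⊢
  intro ε hε
  obtain ⟨N1, hN1⟩ := h1 (ε / (4 * c)) (by positivity)
  obtain ⟨N2, hN2⟩ := h2 (ε / (4 * c)) (by positivity)
  refine ⟨max N1 N2, fun m hm n hn => ?_⟩
  have e1 := hN1 m (le_trans (le_max_left _ _) hm) n (le_trans (le_max_left _ _) hn)
  have e2 := hN2 m (le_trans (le_max_right _ _) hm) n (le_trans (le_max_right _ _) hn)
  rw [dist_eq_norm] at e1 e2 ⊢
  have key := hc (x m - x n)
  rw [map_sub, map_sub] at key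
  have b1 : c * ‖A (x m) - A (x n)‖ < c * (ε / (4 * c)) := mul_lt_mul_of_pos_left e1 hcpos
  have b2 : c * ‖Cc (x m) - Cc (x n)‖ < c * (ε / (4 * c)) := mul_lt_mul_of_pos_left e2 hcpos
  have : c * (ε / (4 * c)) = ε / 4 := by field_simp
  rw [this] at b1 b2
  linarith

theorem semiFredholm_ker {A : E →L[ℝ] F} {Cc : E →L[ℝ] G} (hC : IsCompactOperator Cc)
    {c : ℝ} (hcpos : 0 < c) (hc : ∀ x, ‖x‖ ≤ c * ‖A x‖ + c * ‖Cc x‖) :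
    FiniteDimensional ℝ (ker A) := by
  refine FiniteDimensional.of_isCompact_closedBall₀ ℝ (one_pos) (r := 1) ?_
  refine IsSeqCompact.isCompact ?_
  intro u hu
  set x : ℕ → E := fun n => ((u n : E)) with hx
  have hxbdd : ∀ n, ‖x n‖ ≤ 1 := by
    intro n
    have := hu n
    rw [Metric.mem_closedBall, dist_zero_right] at this
    exact this
  obtain ⟨φ, hφ, hcauchy⟩ := aux_extract hC x hxbdd
  have hAx : ∀ n, A (x (φ n)) = 0 := fun n => (u (φ n)).2
  have h1 : CauchySeq fun n => A (x (φ n)) := by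
    simp only [hAx]
    exact cauchySeq_const 0
  have hxc : CauchySeq fun n => x (φ n) := aux_cauchy hcpos hc h1 hcauchy
  obtain ⟨a, ha⟩ := cauchySeq_tendsto_of_complete hxc
  have haker : a ∈ ker A := by
    have : Tendsto (fun n => A (x (φ n))) atTop (𝓝 (A a)) := (A.continuous.tendsto a).comp ha
    simp only [hAx] at this
    exact LinearMap.mem_ker.2 (tendsto_nhds_unique tendsto_const_nhds this).symm
  have hanorm : ‖a‖ ≤ 1 := by
    refine le_of_tendsto (ha.norm) ?_
    exact Filter.Eventually.of_forall fun n => hxbdd (φ n)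
  refine ⟨⟨a, haker⟩, ?_, φ, hφ, ?_⟩
  · rw [Metric.mem_closedBall, dist_zero_right]
    exact hanorm
  · rw [tendsto_subtype_rng]
    exact ha

theorem semiFredholm_infDist {A : E →L[ℝ] F} {Cc : E →L[ℝ] G} (hC : IsCompactOperator Cc)
    {c : ℝ} (hcpos : 0 < c) (hc : ∀ x, ‖x‖ ≤ c * ‖A x‖ + c * ‖Cc x‖) :
    ∃ c₂ : ℝ, 0 ≤ c₂ ∧ ∀ x : E, Metric.infDist x (ker A) ≤ c₂ * ‖A x‖ := by
  by_contra hcon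
  push_neg at hcon
  have hker_ne : ((ker A : Submodule ℝ E) : Set E).Nonempty := ⟨0, zero_mem _⟩
  -- for each n pick xₙ with infDist (xₙ) > n * ‖A xₙ‖
  have hsel : ∀ n : ℕ, ∃ x : E, (n : ℝ) * ‖A x‖ < Metric.infDist x (ker A) := by
    intro n
    obtain ⟨x, hx⟩ := hcon n (Nat.cast_nonneg n)
    exact ⟨x, hx⟩
  choose xs hxs using hsel
  have hdpos : ∀ n, 0 < Metric.infDist (xs n) (ker A) := by
    intro n
    refine lt_of_le_of_lt ?_ (hxs n)
    positivity
  -- choose kₙ with ‖xₙ - kₙ‖ < 2 * infDist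
  have hksel : ∀ n, ∃ k ∈ (ker A : Submodule ℝ E),
      dist (xs n) k < 2 * Metric.infDist (xs n) (ker A) := by
    intro n
    refine (Metric.infDist_lt_iff hker_ne).1 ?_
    linarith [hdpos n]
  choose ks hks hksdist using hksel
  set y : ℕ → E := fun n => xs n - ks n with hy
  have hynorm_lb : ∀ n, Metric.infDist (xs n) (ker A) ≤ ‖y n‖ := by
    intro n
    have := Metric.infDist_le_dist_of_mem (x := xs n) (hks n)
    rwa [dist_eq_norm] at this
  have hypos : ∀ n, 0 < ‖y n‖ := fun n => lt_of_lt_of_le (hdpos n) (hynorm_lb n)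
  set z : ℕ → E := fun n => ‖y n‖⁻¹ • y n with hz
  have hznorm : ∀ n, ‖z n‖ = 1 := by
    intro n
    rw [hz]
    simp only [norm_smul, norm_inv, norm_norm]
    exact inv_mul_cancel₀ (ne_of_gt (hypos n))
  -- distance of z n to the kernel is at least 1/2
  have hzdist : ∀ n, ∀ k ∈ (ker A : Submodule ℝ E), (1:ℝ)/2 ≤ ‖z n - k‖ := by
    intro n k hk
    have hk' : ks n + ‖y n‖ • k ∈ (ker A : Submodule ℝ E) :=
      add_mem (hks n) (Submodule.smul_mem _ _ hk)
    have h1 : Metric.infDist (xs n) (ker A) ≤ ‖xs n - (ks n + ‖y n‖ • k)‖ := by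
      have := Metric.infDist_le_dist_of_mem (x := xs n) hk'
      rwa [dist_eq_norm] at this
    have h2 : xs n - (ks n + ‖y n‖ • k) = y n - ‖y n‖ • k := by rw [hy]; dsimp only; abel
    have h3 : z n - k = ‖y n‖⁻¹ • (y n - ‖y n‖ • k) := by
      rw [hz, smul_sub]
      congr 1
      rw [smul_smul, inv_mul_cancel₀ (ne_of_gt (hypos n)), one_smul]
    have h4 : ‖z n - k‖ = ‖y n‖⁻¹ * ‖y n - ‖y n‖ • k‖ := by
      rw [h3, norm_smul, norm_inv, norm_norm]
    rw [h4, ← h2]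
    have h5 : ‖y n‖⁻¹ * ‖xs n - (ks n + ‖y n‖ • k)‖ ≥
        ‖y n‖⁻¹ * Metric.infDist (xs n) (ker A) :=
      mul_le_mul_of_nonneg_left h1 (le_of_lt (inv_pos.2 (hypos n)))
    have h6 : (1:ℝ)/2 ≤ ‖y n‖⁻¹ * Metric.infDist (xs n) (ker A) := by
      have hub : ‖y n‖ < 2 * Metric.infDist (xs n) (ker A) := by
        have := hksdist n
        rw [dist_eq_norm] at this
        exact this
      rw [inv_mul_eq_div, le_div_iff₀ (hypos n)]
      linarith
    linarith
  -- A z n tends to zero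
  have hAz : Tendsto (fun n => ‖A (z n)‖) atTop (𝓝 0) := by
    have hbound : ∀ n : ℕ, 1 ≤ n → ‖A (z n)‖ ≤ 1 / n := by
      intro n hn
      have hAy : A (y n) = A (xs n) := by
        rw [hy, map_sub]
        have : A (ks n) = 0 := hks n
        rw [this, sub_zero]
      have h1 : ‖A (z n)‖ = ‖y n‖⁻¹ * ‖A (xs n)‖ := by
        rw [hz, map_smul, norm_smul, norm_inv, norm_norm, hAy]
      have h2 : (n:ℝ) * ‖A (xs n)‖ < Metric.infDist (xs n) (ker A) := hxs n
      have hnpos : (0:ℝ) < n := by exact_mod_cast hn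
      have h3 : ‖A (xs n)‖ < Metric.infDist (xs n) (ker A) / n := by
        rw [lt_div_iff₀ hnpos]; linarith [h2]
      set dn := Metric.infDist (xs n) (ker A) with hdn
      have hdninv : ‖y n‖⁻¹ ≤ dn⁻¹ := by
        apply inv_anti₀ (hdpos n) (hynorm_lb n)
      have h4 : ‖y n‖⁻¹ * ‖A (xs n)‖ ≤ dn⁻¹ * ‖A (xs n)‖ :=
        mul_le_mul_of_nonneg_right hdninv (norm_nonneg _)
      have h5 : dn⁻¹ * ‖A (xs n)‖ ≤ dn⁻¹ * (dn / n) :=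
        mul_le_mul_of_nonneg_left (le_of_lt h3) (le_of_lt (inv_pos.2 (hdpos n)))
      have h6 : dn⁻¹ * (dn / n) = 1 / n := by
        have hdnne : dn ≠ 0 := ne_of_gt (hdpos n)
        have hnne : (n:ℝ) ≠ 0 := ne_of_gt hnpos
        field_simp
      rw [h1]
      calc ‖y n‖⁻¹ * ‖A (xs n)‖ ≤ dn⁻¹ * ‖A (xs n)‖ := h4
      _ ≤ dn⁻¹ * (dn / n) := h5
      _ = 1 / n := h6
    refine squeeze_zero' (g := fun n : ℕ => 1 / (n:ℝ)) (Filter.Eventually.of_forall fun n => norm_nonneg _) ?_ ?_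
    · filter_upwards [Filter.eventually_ge_atTop 1] with n hn
      exact hbound n hn
    · exact tendsto_one_div_atTop_nhds_zero_nat
  -- extract convergent subsequence and derive a contradiction
  have hzbdd : ∀ n, ‖z n‖ ≤ 1 := fun n => le_of_eq (hznorm n)
  obtain ⟨φ, hφ, hcauchy⟩ := aux_extract hC z hzbdd
  have hAz' : Tendsto (fun n => A (z (φ n))) atTop (𝓝 0) := by
    rw [tendsto_zero_iff_norm_tendsto_zero]
    exact hAz.comp (hφ.tendsto_atTop)
  have hxc : CauchySeq fun n => z (φ n) := aux_cauchy hcpos hc hAz'.cauchySeq hcauchy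
  obtain ⟨a, ha⟩ := cauchySeq_tendsto_of_complete hxc
  have haker : a ∈ (ker A : Submodule ℝ E) := by
    have h1 : Tendsto (fun n => A (z (φ n))) atTop (𝓝 (A a)) := (A.continuous.tendsto a).comp ha
    exact LinearMap.mem_ker.2 (tendsto_nhds_unique h1 hAz')
  obtain ⟨N, hN⟩ := (Metric.tendsto_atTop.1 ha) (1/2) (by norm_num)
  have hd1 := hzdist (φ N) a haker
  have hd2 := hN N (le_refl N)
  rw [dist_eq_norm] at hd2
  linarith

theorem semiFredholm_range {A : E →L[ℝ] F} {Cc : E →L[ℝ] G} (hC : IsCompactOperator Cc)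
    {c : ℝ} (hcpos : 0 < c) (hc : ∀ x, ‖x‖ ≤ c * ‖A x‖ + c * ‖Cc x‖) :
    IsClosed (range A : Set F) := by
  obtain ⟨c₂, hc₂nonneg, hc₂⟩ := semiFredholm_infDist hC hcpos hc
  refine IsSeqClosed.isClosed ?_
  intro ys yy hmem htend
  -- choose good preimages
  have hsel : ∀ n, ∃ x : E, A x = ys n ∧ ‖x‖ ≤ c₂ * ‖ys n‖ + 1 := by
    intro n
    obtain ⟨x, hx⟩ := hmem n
    have h1 : Metric.infDist x (ker A) < c₂ * ‖A x‖ + 1 :=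
      lt_of_le_of_lt (hc₂ x) (by linarith)
    obtain ⟨k, hk, hdk⟩ := (Metric.infDist_lt_iff ⟨0, zero_mem _⟩).1 h1
    refine ⟨x - k, ?_, ?_⟩
    · rw [map_sub]
      have : A k = 0 := hk
      rw [this, sub_zero]; exact hx
    · rw [dist_eq_norm] at hdk
      rw [← hx]
      exact le_of_lt hdk
  choose xs hxsA hxsbdd using hsel
  -- the sequence ys is bounded
  have hbdd : BddAbove (Set.range fun n => ‖ys n‖) := (htend.norm).bddAbove_range
  obtain ⟨R₀, hR₀⟩ := hbdd
  have hxsbdd' : ∀ n, ‖xs n‖ ≤ c₂ * R₀ + 1 := by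
    intro n
    refine (hxsbdd n).trans ?_
    have : ‖ys n‖ ≤ R₀ := hR₀ ⟨n, rfl⟩
    nlinarith
  obtain ⟨φ, hφ, hcauchy⟩ := aux_extract hC xs hxsbdd'
  have h1 : CauchySeq fun n => A (xs (φ n)) := by
    have : (fun n => A (xs (φ n))) = fun n => ys (φ n) := by
      funext n; exact hxsA (φ n)
    rw [this]
    exact (htend.comp hφ.tendsto_atTop).cauchySeq
  have hxc : CauchySeq fun n => xs (φ n) := aux_cauchy hcpos hc h1 hcauchy
  obtain ⟨a, ha⟩ := cauchySeq_tendsto_of_complete hxc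
  have hAa : Tendsto (fun n => A (xs (φ n))) atTop (𝓝 (A a)) := (A.continuous.tendsto a).comp ha
  have hAa' : Tendsto (fun n => A (xs (φ n))) atTop (𝓝 yy) := by
    have : (fun n => A (xs (φ n))) = fun n => ys (φ n) := by
      funext n; exact hxsA (φ n)
    rw [this]
    exact htend.comp hφ.tendsto_atTop
  exact ⟨a, tendsto_nhds_unique hAa hAa'⟩

/-- Main semi-Fredholm lemma. -/
theorem semiFredholm {A : E →L[ℝ] F} {Cc : E →L[ℝ] G} (hC : IsCompactOperator Cc)
    {c : ℝ} (hc : ∀ x, ‖x‖ ≤ c * ‖A x‖ + c * ‖Cc x‖) :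
    FiniteDimensional ℝ (ker A) ∧ IsClosed (range A : Set F) := by
  have hcpos : (0:ℝ) < max c 1 := lt_of_lt_of_le one_pos (le_max_right c 1)
  have hc' : ∀ x, ‖x‖ ≤ max c 1 * ‖A x‖ + max c 1 * ‖Cc x‖ := by
    intro x
    refine (hc x).trans (add_le_add ?_ ?_) <;>
      exact mul_le_mul_of_nonneg_right (le_max_left c 1) (norm_nonneg _)
  exact ⟨semiFredholm_ker hC hcpos hc', semiFredholm_range hC hcpos hc'⟩

end SemiFredholm

section Bridge

variable {E F : Type*} [NormedAddCommGroup E] [NormedSpace ℝ E] [CompleteSpace E]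
  [NormedAddCommGroup F] [NormedSpace ℝ F] [CompleteSpace F]

set_option maxHeartbeats 1000000 in
theorem fredholm_inequality {T : E →L[ℝ] F} (hT : IsFredholm T) :
    ∃ (p : E →L[ℝ] (ker T)) (c : ℝ), 1 ≤ c ∧
      ∀ x, ‖x‖ ≤ c * ‖T x‖ + c * ‖p x‖ := by
  haveI := hT.1
  obtain ⟨p, hp⟩ := Submodule.ClosedComplemented.of_finiteDimensional (ker T)
  set M₀ : Submodule ℝ E := LinearMap.ker p.toLinearMap with hM₀
  have hM₀closed : IsClosed (M₀ : Set E) := ContinuousLinearMap.isClosed_ker p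
  haveI : CompleteSpace M₀ := hM₀closed.completeSpace_coe
  haveI : CompleteSpace (range T) := hT.2.1.completeSpace_coe
  set T₀ : M₀ →L[ℝ] (range T) :=
    (T.comp M₀.subtypeL).codRestrict (range T)
      (fun m => LinearMap.mem_range_self _ (m : E)) with hT₀
  have hT₀_apply : ∀ m : M₀, ((T₀ m : F)) = T (m : E) := fun m => rfl
  have hker0 : LinearMap.ker T₀.toLinearMap = ⊥ := by
    rw [LinearMap.ker_eq_bot']
    intro m hm
    have h1 : T (m : E) = 0 := by
      have := congrArg Subtype.val hm
      rwa [ContinuousLinearMap.coe_coe, hT₀_apply] at this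
    have h2 : (m : E) ∈ ker T := h1
    have h3 : p (m : E) = ⟨(m : E), h2⟩ := hp ⟨(m : E), h2⟩
    have h4 : p (m : E) = 0 := m.2
    have : ((⟨(m : E), h2⟩ : ker T) : E) = 0 := by
      rw [← h3, h4]; rfl
    exact Subtype.ext this
  have hrange0 : LinearMap.range T₀.toLinearMap = ⊤ := by
    rw [LinearMap.range_eq_top]
    rintro ⟨y, x, rfl⟩
    refine ⟨⟨x - ↑(p x), ?_⟩, ?_⟩
    · show p (x - ↑(p x)) = 0
      rw [map_sub, hp (p x), sub_self]
    · apply Subtype.ext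
      rw [ContinuousLinearMap.coe_coe, hT₀_apply]
      show T (x - ↑(p x)) = T x
      rw [map_sub]
      have : T ↑(p x) = 0 := (p x).2
      rw [this, sub_zero]
  set e := ContinuousLinearEquiv.ofBijective T₀ hker0 hrange0 with he
  set K : ℝ := ‖(e.symm : (range T) →L[ℝ] M₀)‖ with hK
  have hKbound : ∀ m : M₀, ‖m‖ ≤ K * ‖T (m : E)‖ := by
    intro m
    have h1 : m = e.symm (e m) := (e.symm_apply_apply m).symm
    have h2 : ‖e.symm (e m)‖ ≤ K * ‖e m‖ := (e.symm : (range T) →L[ℝ] M₀).le_opNorm _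
    have h3 : ‖e m‖ = ‖T (m : E)‖ := by
      have : ((e m : F)) = T (m : E) := hT₀_apply m
      rw [← this]; rfl
    calc ‖m‖ = ‖e.symm (e m)‖ := by rw [← h1]
    _ ≤ K * ‖e m‖ := h2
    _ = K * ‖T (m : E)‖ := by rw [h3]
  refine ⟨p, max K 1 + 1, by linarith [le_max_right K 1], fun x => ?_⟩
  set m : M₀ := ⟨x - ↑(p x), by show p (x - ↑(p x)) = 0; rw [map_sub, hp (p x), sub_self]⟩
  have hTm : T ((m : E)) = T x := by
    show T (x - ↑(p x)) = T x
    rw [map_sub]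
    have : T ↑(p x) = 0 := (p x).2
    rw [this, sub_zero]
  have h1 : ‖x‖ ≤ ‖(m : E)‖ + ‖(p x : E)‖ := by
    have hxeq : (m : E) + ↑(p x) = x := by show (x - ↑(p x)) + ↑(p x) = x; abel
    conv_lhs => rw [← hxeq]
    exact norm_add_le _ _
  have h2 : ‖(m : E)‖ ≤ K * ‖T x‖ := by
    have := hKbound m
    rwa [hTm] at this
  have h3 : ‖(p x : E)‖ = ‖p x‖ := rfl
  have hKle : K ≤ max K 1 + 1 := by
    have := le_max_left K 1
    linarith
  have h1le : (1:ℝ) ≤ max K 1 + 1 := by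
    have := le_max_right K 1
    linarith
  calc ‖x‖ ≤ ‖(m : E)‖ + ‖(p x : E)‖ := h1
  _ ≤ K * ‖T x‖ + ‖p x‖ := by rw [h3]; exact add_le_add h2 (le_refl _)
  _ ≤ (max K 1 + 1) * ‖T x‖ + (max K 1 + 1) * ‖p x‖ := by
      refine add_le_add (mul_le_mul_of_nonneg_right hKle (norm_nonneg _)) ?_
      nlinarith [norm_nonneg (p x), h1le]

theorem compact_perturb_semi {T S : E →L[ℝ] F} (hT : IsFredholm T) (hS : IsCompactOperator S) :
    FiniteDimensional ℝ (ker (T + S)) ∧ IsClosed (range (T + S) : Set F) := by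
  haveI := hT.1
  obtain ⟨p, c, hc1, hc⟩ := fredholm_inequality hT
  set Cc : E →L[ℝ] F × (ker T) := S.prod p with hCc
  have hCcompact : IsCompactOperator Cc := aux_compact_prod hS (aux_compact_of_fd p)
  refine semiFredholm hCcompact (c := 2 * c) fun x => ?_
  have h0 : T x = (T + S) x - S x := by
    rw [ContinuousLinearMap.add_apply]; abel
  have h1 : ‖T x‖ ≤ ‖(T + S) x‖ + ‖S x‖ := by
    rw [h0]; exact norm_sub_le _ _
  have h2 : ‖S x‖ ≤ ‖Cc x‖ := norm_fst_le (Cc x)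
  have h3 : ‖p x‖ ≤ ‖Cc x‖ := norm_snd_le (Cc x)
  have hcpos : (0:ℝ) < c := lt_of_lt_of_le one_pos hc1
  calc ‖x‖ ≤ c * ‖T x‖ + c * ‖p x‖ := hc x
  _ ≤ c * (‖(T + S) x‖ + ‖S x‖) + c * ‖Cc x‖ := by
      refine add_le_add (mul_le_mul_of_nonneg_left h1 (le_of_lt hcpos))
        (mul_le_mul_of_nonneg_left h3 (le_of_lt hcpos))
  _ ≤ 2 * c * ‖(T + S) x‖ + 2 * c * ‖Cc x‖ := by nlinarith [norm_nonneg ((T+S) x), norm_nonneg (Cc x), h2]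

theorem one_add_compact_semi {C : F →L[ℝ] F} (hC : IsCompactOperator C) :
    FiniteDimensional ℝ (LinearMap.ker ((1:F →L[ℝ] F) + C).toLinearMap) ∧
      IsClosed ((LinearMap.range ((1:F →L[ℝ] F) + C).toLinearMap : Submodule ℝ F) : Set F) := by
  refine semiFredholm hC (c := 1) fun x => ?_
  have h0 : x = (1 + C) x - C x := by
    rw [ContinuousLinearMap.add_apply, ContinuousLinearMap.one_apply]; abel
  calc ‖x‖ = ‖(1 + C) x - C x‖ := by rw [← h0]
  _ ≤ ‖(1 + C) x‖ + ‖C x‖ := norm_sub_le _ _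
  _ ≤ 1 * ‖(1 + C) x‖ + 1 * ‖C x‖ := by rw [one_mul, one_mul]

end Bridge

section Riesz

variable {F : Type*} [NormedAddCommGroup F] [NormedSpace ℝ F] [CompleteSpace F]

theorem aux_pow_one_add {C : F →L[ℝ] F} (hC : IsCompactOperator C) (k : ℕ) :
    ∃ Ck : F →L[ℝ] F, IsCompactOperator Ck ∧ ((1 + C) ^ k : F →L[ℝ] F) = 1 + Ck := by
  induction k with
  | zero => exact ⟨0, isCompactOperator_zero, by simp⟩
  | succ k ih =>
    obtain ⟨Ck, hCk, hCkeq⟩ := ih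
    refine ⟨C + Ck + Ck * C, ?_, ?_⟩
    · have h1 : IsCompactOperator (Ck * C) := by
        have : ⇑(Ck * C) = ⇑Ck ∘ ⇑C := by
          funext x; rfl
        rw [this]
        exact hCk.comp_clm C
      exact (hC.add hCk).add h1
    · rw [pow_succ, hCkeq]
      noncomm_ring

theorem aux_pow_injective {C : F →L[ℝ] F} (hinj : Function.Injective ((1 + C : F →L[ℝ] F)))
    (k : ℕ) : Function.Injective (((1 + C) ^ k : F →L[ℝ] F)) := by
  induction k with
  | zero => simpa using Function.injective_id
  | succ k ih =>
    rw [pow_succ]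
    have : ⇑(((1 + C) ^ k : F →L[ℝ] F) * (1 + C)) = ⇑((1 + C) ^ k : F →L[ℝ] F) ∘ ⇑(1 + C) := by
      funext x; rfl
    rw [this]
    exact ih.comp hinj

theorem riesz_inj_surj {C : F →L[ℝ] F} (hC : IsCompactOperator C)
    (hinj : Function.Injective ((1 + C : F →L[ℝ] F))) :
    Function.Surjective ((1 + C : F →L[ℝ] F)) := by
  by_contra hns
  set D : F →L[ℝ] F := 1 + C with hD
  set Rk : ℕ → Submodule ℝ F := fun k => LinearMap.range (D ^ k).toLinearMap with hRk
  have hRclosed : ∀ k, IsClosed ((Rk k : Submodule ℝ F) : Set F) := by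
    intro k
    obtain ⟨Ck, hCk, hCkeq⟩ := aux_pow_one_add hC k
    have : Rk k = LinearMap.range ((1:F →L[ℝ] F) + Ck).toLinearMap := by rw [hRk]; simp only; rw [hCkeq]
    rw [this]
    exact (one_add_compact_semi hCk).2
  have hmono : ∀ k, Rk (k + 1) ≤ Rk k := by
    intro k
    rintro _ ⟨x, rfl⟩
    exact ⟨D x, by rw [pow_succ]; rfl⟩
  have hanti : Antitone Rk := antitone_nat_of_succ_le hmono
  have hDmem : ∀ k x, x ∈ Rk k → D x ∈ Rk (k + 1) := by
    rintro k _ ⟨w, rfl⟩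
    exact ⟨w, by rw [pow_succ']; rfl⟩
  have hstrict : ∀ k, Rk (k + 1) < Rk k := by
    intro k
    refine lt_of_le_of_ne (hmono k) fun heq => ?_
    apply hns
    intro y
    have hy : (D ^ k) y ∈ Rk (k + 1) := by
      rw [heq]; exact ⟨y, rfl⟩
    obtain ⟨z, hz⟩ := hy
    rw [pow_succ] at hz
    have hz' : (D ^ k) (D z) = (D ^ k) y := hz
    exact ⟨z, aux_pow_injective hinj k hz'⟩
  -- Riesz sequence
  have hsel : ∀ k, ∃ u : F, u ∈ Rk k ∧ ‖u‖ = 1 ∧ ∀ z ∈ Rk (k + 1), 1 / 2 ≤ ‖u - z‖ := by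
    intro k
    set Sk : Submodule ℝ (Rk k) := (Rk (k + 1)).comap (Rk k).subtype with hSk
    have hSkclosed : IsClosed (Sk : Set (Rk k)) :=
      (hRclosed (k + 1)).preimage continuous_subtype_val
    have hSkproper : ∃ x : (Rk k), x ∉ Sk := by
      obtain ⟨x, hxk, hxk1⟩ := SetLike.exists_of_lt (hstrict k)
      exact ⟨⟨x, hxk⟩, hxk1⟩
    obtain ⟨x₀, hx₀mem, hx₀⟩ := riesz_lemma hSkclosed hSkproper (by norm_num : (1:ℝ)/2 < 1)
    have hx₀ne : x₀ ≠ 0 := by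
      intro h0
      exact hx₀mem (h0 ▸ zero_mem Sk)
    have hx₀pos : 0 < ‖x₀‖ := norm_pos_iff.2 hx₀ne
    refine ⟨‖x₀‖⁻¹ • (x₀ : F), Submodule.smul_mem _ _ x₀.2, ?_, ?_⟩
    · rw [norm_smul, norm_inv, norm_norm]
      exact inv_mul_cancel₀ (ne_of_gt hx₀pos)
    · intro z hz
      have hy : (⟨‖x₀‖ • z, Submodule.smul_mem _ _ (hmono k hz)⟩ : (Rk k)) ∈ Sk := by
        show ‖x₀‖ • z ∈ Rk (k + 1)
        exact Submodule.smul_mem _ _ hz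
      have h1 := hx₀ _ hy
      have h2 : ‖x₀ - (⟨‖x₀‖ • z, Submodule.smul_mem _ _ (hmono k hz)⟩ : (Rk k))‖
          = ‖(x₀ : F) - ‖x₀‖ • z‖ := rfl
      rw [h2] at h1
      have h3 : ‖x₀‖⁻¹ • (x₀ : F) - z = ‖x₀‖⁻¹ • ((x₀ : F) - ‖x₀‖ • z) := by
        rw [smul_sub, smul_smul, inv_mul_cancel₀ (ne_of_gt hx₀pos), one_smul]
      rw [h3, norm_smul, norm_inv, norm_norm]
      rw [inv_mul_eq_div, le_div_iff₀ hx₀pos]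
      calc (1:ℝ)/2 * ‖x₀‖ = 1/2 * ‖x₀‖ := rfl
      _ ≤ ‖(x₀ : F) - ‖x₀‖ • z‖ := h1
  choose u hu1 hu2 hu3 using hsel
  have hsep : ∀ j k, j < k → 1 / 2 ≤ ‖C (u j) - C (u k)‖ := by
    intro j k hjk
    have hCu : ∀ m, C (u m) = D (u m) - u m := by
      intro m
      rw [hD]
      simp only [ContinuousLinearMap.add_apply, ContinuousLinearMap.one_apply]
      abel
    have hz : D (u j) - D (u k) + u k ∈ Rk (j + 1) := by
      refine add_mem (sub_mem ?_ ?_) ?_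
      · exact hDmem j (u j) (hu1 j)
      · exact hanti (by omega : j + 1 ≤ k + 1) (hDmem k (u k) (hu1 k))
      · exact hanti (by omega : j + 1 ≤ k) (hu1 k)
    have h1 := hu3 j _ hz
    have h2 : u j - (D (u j) - D (u k) + u k) = -(C (u j) - C (u k)) := by
      rw [hCu j, hCu k]; abel
    rw [h2, norm_neg] at h1
    exact h1
  have hubdd : ∀ n, ‖u n‖ ≤ 1 := fun n => le_of_eq (hu2 n)
  obtain ⟨φ, hφ, hcauchy⟩ := aux_extract hC u hubdd
  rw [Metric.cauchySeq_iff] at hcauchy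
  obtain ⟨N, hN⟩ := hcauchy (1 / 2) (by norm_num)
  have h1 := hN N (le_refl N) (N + 1) (Nat.le_succ N)
  rw [dist_eq_norm] at h1
  have h2 := hsep (φ N) (φ (N + 1)) (hφ (Nat.lt_succ_self N))
  linarith

theorem riesz_coker_aux (n : ℕ) : ∀ (C : F →L[ℝ] F), IsCompactOperator C →
    finrank ℝ (LinearMap.ker ((1:F →L[ℝ] F) + C).toLinearMap) ≤ n →
    FiniteDimensional ℝ (F ⧸ LinearMap.range ((1:F →L[ℝ] F) + C).toLinearMap) := by
  induction n with
  | zero =>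
    intro C hC hrank
    haveI hkerfd := (one_add_compact_semi hC).1
    have hker : LinearMap.ker ((1:F →L[ℝ] F) + C).toLinearMap = ⊥ :=
      Submodule.finrank_eq_zero.1 (Nat.le_zero.1 hrank)
    have hinj : Function.Injective ((1 + C : F →L[ℝ] F)) := by
      intro a b hab
      have hmem : a - b ∈ LinearMap.ker ((1:F →L[ℝ] F) + C).toLinearMap := by
        rw [LinearMap.mem_ker, ContinuousLinearMap.coe_coe, map_sub, hab, sub_self]
      rw [hker, Submodule.mem_bot] at hmem
      exact sub_eq_zero.mp hmem
    have hsurj := riesz_inj_surj hC hinj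
    have htop : LinearMap.range ((1:F →L[ℝ] F) + C).toLinearMap = ⊤ := LinearMap.range_eq_top.2 hsurj
    haveI : Subsingleton (F ⧸ LinearMap.range ((1:F →L[ℝ] F) + C).toLinearMap) := by
      rw [Submodule.Quotient.subsingleton_iff]
      exact htop
    exact FiniteDimensional.of_rank_eq_zero (by rw [rank_subsingleton'])
  | succ n ih =>
    intro C hC hrank
    set D : F →L[ℝ] F := 1 + C with hD
    haveI hkerfd := (one_add_compact_semi hC).1
    by_cases hker : LinearMap.ker D.toLinearMap = ⊥
    · -- injective case, as in base case
      have hinj : Function.Injective D := by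
        intro a b hab
        have hmem : a - b ∈ LinearMap.ker D.toLinearMap := by
          rw [LinearMap.mem_ker, ContinuousLinearMap.coe_coe, map_sub, hab, sub_self]
        rw [hker, Submodule.mem_bot] at hmem
        exact sub_eq_zero.mp hmem
      have hsurj := riesz_inj_surj hC hinj
      have htop : LinearMap.range D.toLinearMap = ⊤ := LinearMap.range_eq_top.2 hsurj
      haveI : Subsingleton (F ⧸ LinearMap.range D.toLinearMap) := by
        rw [Submodule.Quotient.subsingleton_iff]
        exact htop
      exact FiniteDimensional.of_rank_eq_zero (by rw [rank_subsingleton'])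
    · obtain ⟨e, he_mem, he_ne⟩ := Submodule.exists_mem_ne_zero_of_ne_bot hker
      by_cases hsurj : LinearMap.range D.toLinearMap = ⊤
      · haveI : Subsingleton (F ⧸ LinearMap.range D.toLinearMap) := by
          rw [Submodule.Quotient.subsingleton_iff]
          exact hsurj
        exact FiniteDimensional.of_rank_eq_zero (by rw [rank_subsingleton'])
      · have hw : ∃ w : F, w ∉ LinearMap.range D.toLinearMap := by
          by_contra hcon
          push_neg at hcon
          exact hsurj (eq_top_iff.2 fun y _ => hcon y)
        obtain ⟨w, hw⟩ := hw
        obtain ⟨g, hgnorm, hge⟩ := exists_dual_vector ℝ e (norm_ne_zero_iff.2 he_ne)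
        set c' : F →L[ℝ] ℝ := ‖e‖⁻¹ • g with hc'
        have hc'e : c' e = 1 := by
          rw [hc']
          simp only [ContinuousLinearMap.smul_apply, hge, smul_eq_mul]
          exact inv_mul_cancel₀ (norm_ne_zero_iff.2 he_ne)
        set B : F →L[ℝ] F := c'.smulRight w with hB
        have hB_apply : ∀ x, B x = c' x • w := fun x => rfl
        have hBcompact : IsCompactOperator B := by
          refine aux_compact_of_range_le (W := Submodule.span ℝ {w}) ?_
          rintro _ ⟨x, rfl⟩
          rw [ContinuousLinearMap.coe_coe, hB_apply]
          exact Submodule.smul_mem _ _ (Submodule.mem_span_singleton_self w)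
        set D' : F →L[ℝ] F := D + B with hD'
        have hD'1 : D' = 1 + (C + B) := by rw [hD', hD, add_assoc]
        have hCB : IsCompactOperator (C + B) := hC.add hBcompact
        -- kernel of D'
        have hkerD'_le : LinearMap.ker D'.toLinearMap ≤ LinearMap.ker D.toLinearMap ⊓ LinearMap.ker c'.toLinearMap := by
          intro x hx
          rw [LinearMap.mem_ker] at hx
          have hsum : D x + c' x • w = 0 := by
            rw [← hB_apply]
            exact hx
          have hDx : D x = (-(c' x)) • w := by
            rw [neg_smul]
            exact eq_neg_of_add_eq_zero_left hsum
          by_cases hcx : c' x = 0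
          · refine Submodule.mem_inf.2 ⟨?_, hcx⟩
            rw [LinearMap.mem_ker, ContinuousLinearMap.coe_coe, hDx, hcx, neg_zero, zero_smul]
          · exfalso
            apply hw
            have hwdx : w = (-(c' x))⁻¹ • D x := by
              rw [hDx, inv_smul_smul₀ (neg_ne_zero.2 hcx)]
            rw [hwdx]
            exact Submodule.smul_mem _ _ (LinearMap.mem_range_self _ x)
        have he_not : e ∉ LinearMap.ker D'.toLinearMap := by
          intro hmem
          have h2 : c' e = 0 := (hkerD'_le hmem).2
          rw [hc'e] at h2
          exact one_ne_zero h2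
        have hlt : LinearMap.ker D'.toLinearMap < LinearMap.ker D.toLinearMap := by
          refine lt_of_le_of_ne (le_trans hkerD'_le inf_le_left) ?_
          intro heq
          rw [heq] at he_not
          exact he_not he_mem
        have hrank' : finrank ℝ (LinearMap.ker D'.toLinearMap) ≤ n := by
          have := Submodule.finrank_lt_finrank_of_lt hlt
          omega
        haveI hcoker' : FiniteDimensional ℝ (F ⧸ LinearMap.range D'.toLinearMap) := by
          have h := ih (C + B) hCB (by rw [← hD'1]; exact hrank')
          rwa [← hD'1] at h
        -- range D ⊔ span w contains range D'
        have hle : LinearMap.range D'.toLinearMap ≤ LinearMap.range D.toLinearMap ⊔ Submodule.span ℝ {w} := by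
          rintro _ ⟨x, rfl⟩
          have hx : D' x = D x + c' x • w := by
            rw [← hB_apply]
            rfl
          rw [ContinuousLinearMap.coe_coe, hx]
          exact Submodule.add_mem _ (Submodule.mem_sup_left (LinearMap.mem_range_self _ x))
            (Submodule.mem_sup_right (Submodule.smul_mem _ _ (Submodule.mem_span_singleton_self w)))
        set Rsup : Submodule ℝ F := LinearMap.range D.toLinearMap ⊔ Submodule.span ℝ {w} with hRsup
        have hqsurj : Function.Surjective
            (Submodule.mapQ (LinearMap.range D'.toLinearMap) Rsup LinearMap.id (by simpa using hle)) := by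
          intro yq
          obtain ⟨y, rfl⟩ := Rsup.mkQ_surjective yq
          exact ⟨(LinearMap.range D'.toLinearMap).mkQ y, rfl⟩
        haveI hfd_sup : FiniteDimensional ℝ (F ⧸ Rsup) := Module.Finite.of_surjective _ hqsurj
        set U : Submodule ℝ (F ⧸ LinearMap.range D.toLinearMap) :=
          (Submodule.span ℝ {w}).map (LinearMap.range D.toLinearMap).mkQ with hU
        haveI hUfd : FiniteDimensional ℝ U := Module.Finite.map _ _
        haveI hQQ : FiniteDimensional ℝ ((F ⧸ LinearMap.range D.toLinearMap) ⧸ U) :=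
          (Submodule.quotientQuotientEquivQuotientSup (LinearMap.range D.toLinearMap)
            (Submodule.span ℝ {w})).symm.finiteDimensional
        have htopfg : (⊤ : Submodule ℝ (F ⧸ LinearMap.range D.toLinearMap)).FG := by
          apply Submodule.fg_of_fg_map_of_fg_inf_ker U.mkQ
          · rw [Submodule.map_top, Submodule.range_mkQ]
            exact Module.finite_def.1 hQQ
          · rw [top_inf_eq, Submodule.ker_mkQ]
            exact (Submodule.fg_top U).1 (Module.finite_def.1 hUfd)
        exact Module.finite_def.2 htopfg

theorem riesz_coker {C : F →L[ℝ] F} (hC : IsCompactOperator C) :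
    FiniteDimensional ℝ (F ⧸ LinearMap.range ((1:F →L[ℝ] F) + C).toLinearMap) := by
  haveI := (one_add_compact_semi hC).1
  exact riesz_coker_aux (finrank ℝ (LinearMap.ker ((1:F →L[ℝ] F) + C).toLinearMap)) C hC (le_refl _)


end Riesz

section Parametrix

variable {E F : Type*} [NormedAddCommGroup E] [NormedSpace ℝ E] [CompleteSpace E]
  [NormedAddCommGroup F] [NormedSpace ℝ F] [CompleteSpace F]

set_option maxHeartbeats 1000000 in
theorem coker_perturb {T S : E →L[ℝ] F} (hT : IsFredholm T) (hS : IsCompactOperator S) :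
    FiniteDimensional ℝ (F ⧸ LinearMap.range (T + S).toLinearMap) := by
  haveI := hT.1
  haveI := hT.2.2
  obtain ⟨p, hp⟩ := Submodule.ClosedComplemented.of_finiteDimensional (ker T)
  set M₀ : Submodule ℝ E := LinearMap.ker p.toLinearMap with hM₀
  have hM₀closed : IsClosed (M₀ : Set E) := ContinuousLinearMap.isClosed_ker p
  haveI : CompleteSpace M₀ := hM₀closed.completeSpace_coe
  haveI : CompleteSpace (range T) := hT.2.1.completeSpace_coe
  set T₀ : M₀ →L[ℝ] (range T) :=
    (T.comp M₀.subtypeL).codRestrict (range T)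
      (fun m => LinearMap.mem_range_self _ (m : E)) with hT₀
  have hT₀_apply : ∀ m : M₀, ((T₀ m : F)) = T (m : E) := fun m => rfl
  have hker0 : LinearMap.ker T₀.toLinearMap = ⊥ := by
    rw [LinearMap.ker_eq_bot']
    intro m hm
    have h1 : T (m : E) = 0 := by
      have := congrArg Subtype.val hm
      rwa [ContinuousLinearMap.coe_coe, hT₀_apply] at this
    have h2 : (m : E) ∈ ker T := h1
    have h3 : p (m : E) = ⟨(m : E), h2⟩ := hp ⟨(m : E), h2⟩
    have h4 : p (m : E) = 0 := m.2
    have h5 : ((⟨(m : E), h2⟩ : ker T) : E) = 0 := by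
      rw [← h3, h4]; rfl
    exact Subtype.ext h5
  have hrange0 : LinearMap.range T₀.toLinearMap = ⊤ := by
    rw [LinearMap.range_eq_top]
    rintro ⟨y, x, rfl⟩
    refine ⟨⟨x - ↑(p x), ?_⟩, ?_⟩
    · show p (x - ↑(p x)) = 0
      rw [map_sub, hp (p x), sub_self]
    · apply Subtype.ext
      rw [ContinuousLinearMap.coe_coe, hT₀_apply]
      show T (x - ↑(p x)) = T x
      rw [map_sub]
      have : T ↑(p x) = 0 := (p x).2
      rw [this, sub_zero]
  set e := ContinuousLinearEquiv.ofBijective T₀ hker0 hrange0 with he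
  obtain ⟨q, hq⟩ := Submodule.ClosedComplemented.of_quotient_finiteDimensional hT.2.1
  set Rop : F →L[ℝ] E :=
    M₀.subtypeL.comp (((e.symm : (range T) →L[ℝ] M₀)).comp q) with hRop
  have hTRop : ∀ y, T (Rop y) = ((q y : F)) := by
    intro y
    have h1 : Rop y = ((e.symm (q y) : E)) := rfl
    rw [h1, ← hT₀_apply]
    congr 1
    have h2 : T₀ (e.symm (q y)) = e (e.symm (q y)) := rfl
    rw [h2, e.apply_symm_apply]
  set P1 : F →L[ℝ] F := (range T).subtypeL.comp q with hP1
  set K' : F →L[ℝ] F := 1 - P1 with hK'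
  have hK'kills : ∀ y ∈ range T, K' y = 0 := by
    intro y hy
    have h1 : q y = ⟨y, hy⟩ := hq ⟨y, hy⟩
    show y - P1 y = 0
    have h2 : P1 y = ((q y : F)) := rfl
    rw [h2, h1, sub_self]
  have hrangele : range T ≤ LinearMap.ker (K' : F →ₗ[ℝ] F) := by
    intro y hy
    exact hK'kills y hy
  haveI hK'fd : FiniteDimensional ℝ (LinearMap.range K'.toLinearMap) := by
    have hle := Submodule.range_liftQ (range T) (K' : F →ₗ[ℝ] F) hrangele
    haveI : FiniteDimensional ℝ
        (LinearMap.range (Submodule.liftQ (range T) (K' : F →ₗ[ℝ] F) hrangele)) :=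
      inferInstance
    have heq : LinearMap.range (K' : F →ₗ[ℝ] F)
        = LinearMap.range (Submodule.liftQ (range T) (K' : F →ₗ[ℝ] F) hrangele) := hle.symm
    show FiniteDimensional ℝ (LinearMap.range (K' : F →ₗ[ℝ] F))
    rw [heq]
    infer_instance
  have hK'compact : IsCompactOperator K' :=
    aux_compact_of_range_le (W := LinearMap.range K'.toLinearMap) (le_refl _)
  set CC : F →L[ℝ] F := S.comp Rop - K' with hCC
  have hCCcompact : IsCompactOperator CC := (hS.comp_clm Rop).sub hK'compact
  have hle2 : LinearMap.range ((1:F →L[ℝ] F) + CC).toLinearMap ≤ LinearMap.range (T + S).toLinearMap := by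
    rintro _ ⟨y, rfl⟩
    refine ⟨Rop y, ?_⟩
    have h1 : (T + S) (Rop y) = T (Rop y) + S (Rop y) := rfl
    have h2 : ((1:F →L[ℝ] F) + CC) y = y + (S (Rop y) - K' y) := rfl
    rw [ContinuousLinearMap.coe_coe, ContinuousLinearMap.coe_coe, h1, h2, hTRop]
    have h3 : K' y = y - ((q y : F)) := rfl
    rw [h3]
    abel
  haveI := riesz_coker hCCcompact
  have hqsurj : Function.Surjective
      (Submodule.mapQ (LinearMap.range ((1:F →L[ℝ] F) + CC).toLinearMap) (LinearMap.range (T + S).toLinearMap)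
        LinearMap.id (by simpa using hle2)) := by
    intro yq
    obtain ⟨y, rfl⟩ := (LinearMap.range (T + S).toLinearMap).mkQ_surjective yq
    exact ⟨(LinearMap.range ((1:F →L[ℝ] F) + CC).toLinearMap).mkQ y, rfl⟩
  exact Module.Finite.of_surjective _ hqsurj

theorem isFredholm_add_compact {T S : E →L[ℝ] F} (hT : IsFredholm T)
    (hS : IsCompactOperator S) : IsFredholm (T + S) :=
  ⟨(compact_perturb_semi hT hS).1, (compact_perturb_semi hT hS).2, coker_perturb hT hS⟩

end Parametrix

theorem stmt_9 {E F : Type*} [NormedAddCommGroup E] [NormedSpace ℝ E] [CompleteSpace E]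
    [NormedAddCommGroup F] [NormedSpace ℝ F] [CompleteSpace F]
    (T S : E →L[ℝ] F) (hT : IsFredholm T) (hS : IsCompactOperator S) :
    IsFredholm (T + S) ∧ fredholmIndex (T + S) = fredholmIndex T := by
  have hall : ∀ t : ℝ, IsFredholm (T + t • S) := by
    intro t
    have hcs : IsCompactOperator (t • S) := by
      have := hS.smul t
      have hcoe : ⇑(t • S) = t • ⇑S := by rfl
      rwa [hcoe]
    exact isFredholm_add_compact hT hcs
  have hlc : IsLocallyConstant (fun t : ℝ => fredholmIndex (T + t • S)) := by
    rw [IsLocallyConstant.iff_exists_open]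
    intro t
    obtain ⟨ε, hε, hst⟩ := FData.stability (hall t)
    refine ⟨Metric.ball t (ε / (‖S‖ + 1)), Metric.isOpen_ball,
      Metric.mem_ball_self (by positivity), ?_⟩
    intro s hs
    have hdecomp : T + s • S = (T + t • S) + ((s - t) • S) := by
      rw [sub_smul, add_assoc]
      congr 1
      abel
    have hnorm : ‖(s - t) • S‖ < ε := by
      rw [norm_smul (s - t) S, Real.norm_eq_abs]
      have habs : |s - t| < ε / (‖S‖ + 1) := by
        have := hs
        rw [Metric.mem_ball, Real.dist_eq] at this
        exact this
      have hS1 : ‖S‖ < ‖S‖ + 1 := by linarith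
      calc |s - t| * ‖S‖ ≤ |s - t| * (‖S‖ + 1) := by
            exact mul_le_mul_of_nonneg_left (by linarith) (abs_nonneg _)
      _ < ε / (‖S‖ + 1) * (‖S‖ + 1) := by
            refine mul_lt_mul_of_pos_right habs (by positivity)
      _ = ε := by field_simp
    have hidx := (hst _ hnorm).2
    rw [← hdecomp] at hidx
    exact hidx
  have hconst : fredholmIndex (T + (1:ℝ) • S) = fredholmIndex (T + (0:ℝ) • S) :=
    hlc.apply_eq_of_preconnectedSpace 1 0
  constructor
  · have := hall 1
    rwa [one_smul] at this
  · have h2 := hconst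
    rwa [one_smul, zero_smul, add_zero] at h2
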